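/- Let μ₁, μ₂ ∈ ℝ, σ₁, σ₂ > 0, and let X and Y be independent real random variables with Gaussian distributions of means μ₁, μ₂ and variances σ₁², σ₂² respectively. Let ϱ ∈ [1/2, 1) and let q_X, q_Y ∈ ℝ satisfy P(X ≤ q_X) ≥ ϱ and P(Y ≤ q_Y) ≥ ϱ. Then P(X + Y ≤ q_X + q_Y) ≥ ϱ. -/

import Mathlib

open MeasureTheory ProbabilityTheory Real

open scoped ENNReal NNReal

section Aux

/-- Pointwise convolution identity for Gaussian densities. -/
lemma aux_gaussianPDFReal_conv (μ₁ μ₂ : ℝ) (v₁ v₂ : ℝ≥0) (hv₁ : (v₁:ℝ) ≠ 0)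
    (hv₂ : (v₂:ℝ) ≠ 0) (t : ℝ) :
    ∫ x, gaussianPDFReal μ₁ v₁ x * gaussianPDFReal μ₂ v₂ (t - x)
      = gaussianPDFReal (μ₁ + μ₂) (v₁ + v₂) t := by
  have hA : (0:ℝ) < v₁ := lt_of_le_of_ne v₁.coe_nonneg (Ne.symm hv₁)
  have hB : (0:ℝ) < v₂ := lt_of_le_of_ne v₂.coe_nonneg (Ne.symm hv₂)
  have hpi : (0:ℝ) < π := Real.pi_pos
  set A : ℝ := (v₁:ℝ) with hAdef
  set B : ℝ := (v₂:ℝ) with hBdef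
  set t' : ℝ := t - μ₁ - μ₂ with ht'
  set b : ℝ := (A + B) / (2 * A * B) with hbdef
  have hb : 0 < b := by rw [hbdef]; positivity
  set m : ℝ := μ₁ + A * t' / (A + B) with hmdef
  set c : ℝ := (Real.sqrt (2 * π * A))⁻¹ * (Real.sqrt (2 * π * B))⁻¹
    * rexp (-t' ^ 2 / (2 * (A + B))) with hcdef
  have hpt : ∀ x, gaussianPDFReal μ₁ v₁ x * gaussianPDFReal μ₂ v₂ (t - x)
      = c * rexp (-b * (x - m) ^ 2) := by
    intro x
    rw [gaussianPDFReal, gaussianPDFReal, hcdef]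
    rw [show ((Real.sqrt (2 * π * A))⁻¹ * rexp (-(x - μ₁) ^ 2 / (2 * A)))
        * ((Real.sqrt (2 * π * B))⁻¹ * rexp (-(t - x - μ₂) ^ 2 / (2 * B)))
        = (Real.sqrt (2 * π * A))⁻¹ * (Real.sqrt (2 * π * B))⁻¹
          * (rexp (-(x - μ₁) ^ 2 / (2 * A)) * rexp (-(t - x - μ₂) ^ 2 / (2 * B))) from by ring]
    rw [← Real.exp_add]
    have hexp : -(x - μ₁) ^ 2 / (2 * A) + -(t - x - μ₂) ^ 2 / (2 * B)
        = -t' ^ 2 / (2 * (A + B)) + -b * (x - m) ^ 2 := by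
      rw [hbdef, hmdef, ht']
      field_simp
      ring
    rw [hexp, Real.exp_add]
    ring
  rw [integral_congr_ae (ae_of_all _ hpt), MeasureTheory.integral_const_mul]
  rw [show (fun x => rexp (-b * (x - m) ^ 2)) = fun x => rexp (-b * (x - m) ^ 2) from rfl]
  rw [integral_sub_right_eq_self (fun a => rexp (-b * a ^ 2)) m, integral_gaussian]
  rw [gaussianPDFReal]
  have hAB : ((v₁ + v₂ : ℝ≥0) : ℝ) = A + B := by push_cast; rfl
  rw [hAB]
  have harg : -(t - (μ₁ + μ₂)) ^ 2 / (2 * (A + B)) = -t' ^ 2 / (2 * (A + B)) := by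
    rw [ht']; ring_nf
  rw [harg, hcdef]
  rw [show (Real.sqrt (2 * π * A))⁻¹ * (Real.sqrt (2 * π * B))⁻¹ * rexp (-t' ^ 2 / (2 * (A + B)))
      * Real.sqrt (π / b)
      = ((Real.sqrt (2 * π * A))⁻¹ * (Real.sqrt (2 * π * B))⁻¹ * Real.sqrt (π / b))
        * rexp (-t' ^ 2 / (2 * (A + B))) from by ring]
  congr 1
  rw [← Real.sqrt_inv, ← Real.sqrt_inv, ← Real.sqrt_mul (by positivity),
    ← Real.sqrt_mul (by positivity), ← Real.sqrt_inv]
  congr 1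
  rw [hbdef]
  field_simp

lemma aux_gaussianPDFReal_bdd (μ : ℝ) (v : ℝ≥0) (x : ℝ) :
    gaussianPDFReal μ v x ≤ (Real.sqrt (2 * π * v))⁻¹ := by
  rw [gaussianPDFReal]
  have h1 : rexp (-(x - μ) ^ 2 / (2 * v)) ≤ 1 := by
    rw [Real.exp_le_one_iff]
    apply div_nonpos_of_nonpos_of_nonneg
    · simp [sq_nonneg]
    · positivity
  calc (Real.sqrt (2 * π * v))⁻¹ * rexp (-(x - μ) ^ 2 / (2 * ↑v))
      ≤ (Real.sqrt (2 * π * v))⁻¹ * 1 := by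
        apply mul_le_mul_of_nonneg_left h1 (by positivity)
    _ = (Real.sqrt (2 * π * v))⁻¹ := mul_one _

lemma aux_integrable_conv (μ₁ μ₂ : ℝ) (v₁ v₂ : ℝ≥0) (t : ℝ) :
    Integrable (fun x => gaussianPDFReal μ₁ v₁ x * gaussianPDFReal μ₂ v₂ (t - x)) := by
  have h : Integrable (fun x => gaussianPDFReal μ₂ v₂ (t - x) * gaussianPDFReal μ₁ v₁ x) := by
    apply (integrable_gaussianPDFReal μ₁ v₁).bdd_mul (c := (Real.sqrt (2 * π * v₂))⁻¹)
    · exact ((measurable_gaussianPDFReal μ₂ v₂).comp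
        (measurable_const.sub measurable_id)).aestronglyMeasurable
    · refine ae_of_all _ (fun x => ?_)
      rw [Real.norm_eq_abs, abs_of_nonneg (gaussianPDFReal_nonneg _ _ _)]
      exact aux_gaussianPDFReal_bdd μ₂ v₂ (t - x)
  simpa [mul_comm] using h

/-- lintegral version of the pointwise convolution identity. -/
lemma aux_gaussianPDF_lintegral_conv (μ₁ μ₂ : ℝ) (v₁ v₂ : ℝ≥0) (hv₁ : (v₁:ℝ) ≠ 0)
    (hv₂ : (v₂:ℝ) ≠ 0) (t : ℝ) :
    ∫⁻ x, gaussianPDF μ₁ v₁ x * gaussianPDF μ₂ v₂ (t - x)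
      = gaussianPDF (μ₁ + μ₂) (v₁ + v₂) t := by
  simp_rw [gaussianPDF, ← ENNReal.ofReal_mul (gaussianPDFReal_nonneg μ₁ v₁ _)]
  rw [← ofReal_integral_eq_lintegral_ofReal (aux_integrable_conv μ₁ μ₂ v₁ v₂ t)
    (ae_of_all _ fun x => mul_nonneg (gaussianPDFReal_nonneg _ _ _)
      (gaussianPDFReal_nonneg _ _ _))]
  rw [aux_gaussianPDFReal_conv μ₁ μ₂ v₁ v₂ hv₁ hv₂ t]

/-- Convolution of Gaussian measures. -/
lemma aux_gaussianReal_conv (μ₁ μ₂ : ℝ) (v₁ v₂ : ℝ≥0) (hv₁ : v₁ ≠ 0) (hv₂ : v₂ ≠ 0) :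
    Measure.conv (gaussianReal μ₁ v₁) (gaussianReal μ₂ v₂) = gaussianReal (μ₁ + μ₂) (v₁ + v₂) := by
  have hv₁' : (v₁:ℝ) ≠ 0 := by simpa using hv₁
  have hv₂' : (v₂:ℝ) ≠ 0 := by simpa using hv₂
  have hv : v₁ + v₂ ≠ 0 := by
    simp only [ne_eq, ← NNReal.coe_eq_zero, NNReal.coe_add]
    intro h
    have := v₁.coe_nonneg
    have := v₂.coe_nonneg
    have h1 : (v₁:ℝ) = 0 := by linarith
    exact hv₁' h1
  ext s hs
  have hconv : Measure.conv (gaussianReal μ₁ v₁) (gaussianReal μ₂ v₂)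
      = Measure.map (fun p : ℝ × ℝ => p.1 + p.2)
        ((gaussianReal μ₁ v₁).prod (gaussianReal μ₂ v₂)) := rfl
  rw [hconv, Measure.map_apply measurable_add hs,
    Measure.prod_apply (measurable_add hs)]
  have hinner : ∀ x : ℝ, gaussianReal μ₂ v₂ (Prod.mk x ⁻¹' ((fun p : ℝ × ℝ => p.1 + p.2) ⁻¹' s))
      = ∫⁻ u in s, gaussianPDF μ₂ v₂ (u - x) := by
    intro x
    have hpre : Prod.mk x ⁻¹' ((fun p : ℝ × ℝ => p.1 + p.2) ⁻¹' s)
        = (fun y => x + y) ⁻¹' s := rfl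
    rw [hpre, gaussianReal_apply μ₂ hv₂]
    have := (measurePreserving_add_left (volume : Measure ℝ) x).setLIntegral_comp_preimage_emb
      (MeasurableEquiv.addLeft x).measurableEmbedding (fun u => gaussianPDF μ₂ v₂ (u - x)) s
    simp only [add_sub_cancel_left] at this
    exact this
  simp_rw [hinner]
  have hm : Measurable fun x : ℝ => ∫⁻ u in s, gaussianPDF μ₂ v₂ (u - x) := by
    have h1 : ∀ x : ℝ, ∫⁻ u in s, gaussianPDF μ₂ v₂ (u - x)
        = ∫⁻ u, Set.indicator s (fun u => gaussianPDF μ₂ v₂ (u - x)) u := fun x =>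
      (lintegral_indicator hs (fun u => gaussianPDF μ₂ v₂ (u - x))).symm
    simp_rw [h1]
    apply Measurable.lintegral_prod_right
      (f := fun x u => Set.indicator s (fun u => gaussianPDF μ₂ v₂ (u - x)) u)
    have h2 : (Function.uncurry fun x u =>
        Set.indicator s (fun u => gaussianPDF μ₂ v₂ (u - x)) u)
        = Set.indicator (Prod.snd ⁻¹' s)
          (fun p : ℝ × ℝ => gaussianPDF μ₂ v₂ (p.2 - p.1)) := by
      funext p
      rw [Function.uncurry]
      by_cases hps : p.2 ∈ s
      · rw [Set.indicator_of_mem hps, Set.indicator_of_mem (by exact hps)]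
      · rw [Set.indicator_of_notMem hps, Set.indicator_of_notMem (by exact hps)]
    rw [h2]
    exact Measurable.indicator
      ((measurable_gaussianPDF μ₂ v₂).comp (measurable_snd.sub measurable_fst))
      (measurable_snd hs)
  rw [gaussianReal_of_var_ne_zero μ₁ hv₁,
    lintegral_withDensity_eq_lintegral_mul _ (measurable_gaussianPDF μ₁ v₁) hm]
  have h3 : ∀ x : ℝ, gaussianPDF μ₁ v₁ x * ∫⁻ u in s, gaussianPDF μ₂ v₂ (u - x)
      = ∫⁻ u in s, gaussianPDF μ₁ v₁ x * gaussianPDF μ₂ v₂ (u - x) := fun x =>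
    (lintegral_const_mul _ ((measurable_gaussianPDF μ₂ v₂).comp
      (measurable_id.sub measurable_const))).symm
  simp only [Pi.mul_apply]
  simp_rw [h3]
  rw [lintegral_lintegral_swap]
  · have h4 : ∀ u : ℝ, ∫⁻ x, gaussianPDF μ₁ v₁ x * gaussianPDF μ₂ v₂ (u - x)
        = gaussianPDF (μ₁ + μ₂) (v₁ + v₂) u := fun u =>
      aux_gaussianPDF_lintegral_conv μ₁ μ₂ v₁ v₂ hv₁' hv₂' u
    simp_rw [h4]
    exact (gaussianReal_apply (μ₁ + μ₂) hv s).symm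
  · apply Measurable.aemeasurable
    exact ((measurable_gaussianPDF μ₁ v₁).comp measurable_fst).mul
      ((measurable_gaussianPDF μ₂ v₂).comp (measurable_snd.sub measurable_fst))

/-- CDF scaling. -/
lemma aux_gaussianReal_Iic (μ σ : ℝ) (hσ : 0 < σ) (q : ℝ) :
    gaussianReal μ ⟨σ ^ 2, sq_nonneg σ⟩ (Set.Iic q)
      = gaussianReal 0 1 (Set.Iic ((q - μ) / σ)) := by
  have h1 : (gaussianReal 0 1).map (σ * ·) = gaussianReal 0 ⟨σ ^ 2, sq_nonneg σ⟩ := by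
    rw [gaussianReal_map_const_mul σ]
    norm_num
    rfl
  have h2 : (gaussianReal 0 ⟨σ ^ 2, sq_nonneg σ⟩).map (· + μ)
      = gaussianReal μ ⟨σ ^ 2, sq_nonneg σ⟩ := by
    have := gaussianReal_map_add_const (μ := 0) (v := ⟨σ ^ 2, sq_nonneg σ⟩) μ
    rw [zero_add] at this
    exact this
  have h3 : gaussianReal μ ⟨σ ^ 2, sq_nonneg σ⟩
      = (gaussianReal 0 1).map (fun x => σ * x + μ) := by
    rw [← h2, ← h1, Measure.map_map (measurable_add_const μ) (measurable_const_mul σ)]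
    rfl
  rw [h3, Measure.map_apply (by fun_prop) measurableSet_Iic]
  congr 1
  ext x
  simp only [Set.mem_preimage, Set.mem_Iic]
  rw [le_div_iff₀ hσ]
  constructor <;> intro h <;> nlinarith

lemma aux_quantile_nonneg {z : ℝ} (h : ENNReal.ofReal (1/2 : ℝ) ≤ gaussianReal 0 1 (Set.Iic z)) :
    0 ≤ z := by
  by_contra hz
  push_neg at hz
  set N := gaussianReal 0 1 with hN
  have hmap : N.map (fun x : ℝ => -x) = N := by
    have h1 : (fun x : ℝ => -x) = (fun x : ℝ => (-1 : ℝ) * x) := by funext x; ring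
    rw [hN, h1, gaussianReal_map_const_mul]
    norm_num
  have hsym : ∀ a : ℝ, N (Set.Ici (-a)) = N (Set.Iic a) := by
    intro a
    conv_lhs => rw [← hmap]
    rw [Measure.map_apply measurable_neg measurableSet_Ici]
    congr 1
    ext x
    simp
  have hatom : N {(0:ℝ)} = 0 := by
    rw [hN, gaussianReal_apply 0 one_ne_zero]
    simp
  have hIic0 : N (Set.Iic (0:ℝ)) = 1/2 := by
    have hcompl : N (Set.Iic (0:ℝ)) + N (Set.Ioi (0:ℝ)) = 1 := by
      rw [← measure_union (Set.Iic_disjoint_Ioi le_rfl) measurableSet_Ioi]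
      simp [Set.Iic_union_Ioi]
    have hIoi : N (Set.Ioi (0:ℝ)) = N (Set.Ici (0:ℝ)) := by
      have : Set.Ici (0:ℝ) = {(0:ℝ)} ∪ Set.Ioi 0 := by
        ext x; simp [le_iff_lt_or_eq, or_comm, eq_comm]
      rw [this, measure_union (by simp) measurableSet_Ioi, hatom, zero_add]
    have h0 : N (Set.Ici (0:ℝ)) = N (Set.Iic (0:ℝ)) := by
      have := hsym 0
      rwa [neg_zero] at this
    rw [hIoi, h0] at hcompl
    have h2 : 2 * N (Set.Iic (0:ℝ)) = 1 := by rw [two_mul]; exact hcompl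
    rw [ENNReal.eq_div_iff two_ne_zero ENNReal.ofNat_ne_top]
    exact h2
  have hpos : 0 < N (Set.Ioc z 0) := by
    rw [hN, gaussianReal_apply 0 one_ne_zero]
    by_contra h0
    push_neg at h0
    have h0' : ∫⁻ x in Set.Ioc z 0, gaussianPDF 0 1 x = 0 := le_antisymm h0 zero_le
    have hae := (lintegral_eq_zero_iff (measurable_gaussianPDF 0 1)).mp h0'
    rw [Filter.EventuallyEq, ae_iff] at hae
    simp only [Pi.zero_apply, (fun x => (gaussianPDF_pos 0 one_ne_zero x).ne'),
      not_false_iff, Set.setOf_true, Measure.restrict_apply_univ] at hae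
    rw [Real.volume_Ioc] at hae
    simp only [ENNReal.ofReal_eq_zero] at hae
    linarith
  have hsplit : N (Set.Iic z) + N (Set.Ioc z 0) = N (Set.Iic (0:ℝ)) := by
    rw [← measure_union (Set.Iic_disjoint_Ioc le_rfl) measurableSet_Ioc,
      Set.Iic_union_Ioc_eq_Iic hz.le]
  have hle : ENNReal.ofReal (1/2 : ℝ) = (1/2 : ℝ≥0∞) := by
    rw [ENNReal.ofReal_div_of_pos (by norm_num)]
    norm_num
  rw [hle] at h
  have : (1/2 : ℝ≥0∞) < 1/2 := by
    calc (1/2 : ℝ≥0∞) < 1/2 + N (Set.Ioc z 0) :=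
          ENNReal.lt_add_right (by norm_num) hpos.ne'
      _ ≤ N (Set.Iic z) + N (Set.Ioc z 0) := add_le_add_left h _
      _ = N (Set.Iic (0:ℝ)) := hsplit
      _ = 1/2 := hIic0
  exact absurd this (lt_irrefl _)

end Aux

/-- Gaussian special case of quantile sub-additivity (Lemma 2 of the paper):
for independent Gaussians `X ~ N(μ₁, σ₁²)`, `Y ~ N(μ₂, σ₂²)` and `ϱ ∈ [1/2, 1)`,
if `P(X ≤ qX) ≥ ϱ` and `P(Y ≤ qY) ≥ ϱ` then `P(X + Y ≤ qX + qY) ≥ ϱ`. -/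
theorem gaussian_gaussian_quantile_subadditive
    {Ω : Type*} [MeasurableSpace Ω] (P : Measure Ω) [IsProbabilityMeasure P]
    (μ₁ μ₂ σ₁ σ₂ : ℝ) (hσ₁ : 0 < σ₁) (hσ₂ : 0 < σ₂)
    (X Y : Ω → ℝ)
    (hXY : IndepFun X Y P)
    (hX : Measure.map X P = gaussianReal μ₁ ⟨σ₁ ^ 2, sq_nonneg σ₁⟩)
    (hY : Measure.map Y P = gaussianReal μ₂ ⟨σ₂ ^ 2, sq_nonneg σ₂⟩)
    (ϱ : ℝ) (hϱ : ϱ ∈ Set.Ico (1 / 2 : ℝ) 1)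
    (qX qY : ℝ)
    (hqX : ENNReal.ofReal ϱ ≤ P {ω | X ω ≤ qX})
    (hqY : ENNReal.ofReal ϱ ≤ P {ω | Y ω ≤ qY}) :
    ENNReal.ofReal ϱ ≤ P {ω | X ω + Y ω ≤ qX + qY} := by
  have hmX : AEMeasurable X P := aemeasurable_of_map_neZero (by rw [hX]; exact (inferInstance : NeZero (gaussianReal μ₁ (NNReal.mk (σ₁ ^ 2) (sq_nonneg σ₁)))))
  have hmY : AEMeasurable Y P := aemeasurable_of_map_neZero (by rw [hY]; exact (inferInstance : NeZero (gaussianReal μ₂ (NNReal.mk (σ₂ ^ 2) (sq_nonneg σ₂)))))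
  set v₁ : ℝ≥0 := ⟨σ₁ ^ 2, sq_nonneg σ₁⟩ with hv₁def
  set v₂ : ℝ≥0 := ⟨σ₂ ^ 2, sq_nonneg σ₂⟩ with hv₂def
  have hv₁ : v₁ ≠ 0 := by
    simp only [hv₁def, ne_eq, ← NNReal.coe_eq_zero, NNReal.coe_mk]
    exact fun h => (pow_pos hσ₁ 2).ne' (congrArg Subtype.val h)
  have hv₂ : v₂ ≠ 0 := by
    simp only [hv₂def, ne_eq, ← NNReal.coe_eq_zero, NNReal.coe_mk]
    exact fun h => (pow_pos hσ₂ 2).ne' (congrArg Subtype.val h)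
  -- law of the sum
  have hsum : Measure.map (fun ω => X ω + Y ω) P = gaussianReal (μ₁ + μ₂) (v₁ + v₂) := by
    have h1 : Measure.map (fun ω => X ω + Y ω) P
        = Measure.map (fun p : ℝ × ℝ => p.1 + p.2) (Measure.map (fun ω => (X ω, Y ω)) P) := by
      rw [AEMeasurable.map_map_of_aemeasurable measurable_add.aemeasurable (hmX.prodMk hmY)]
      rfl
    rw [h1, (ProbabilityTheory.indepFun_iff_map_prod_eq_prod_map_map hmX hmY).mp hXY, hX, hY]
    exact aux_gaussianReal_conv _ _ _ _ hv₁ hv₂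
  -- rewrite the three probabilities as standard gaussian CDF values
  have hPX : P {ω | X ω ≤ qX} = gaussianReal 0 1 (Set.Iic ((qX - μ₁) / σ₁)) := by
    rw [← aux_gaussianReal_Iic μ₁ σ₁ hσ₁, ← hX,
      Measure.map_apply_of_aemeasurable hmX measurableSet_Iic]
    rfl
  have hPY : P {ω | Y ω ≤ qY} = gaussianReal 0 1 (Set.Iic ((qY - μ₂) / σ₂)) := by
    rw [← aux_gaussianReal_Iic μ₂ σ₂ hσ₂, ← hY,
      Measure.map_apply_of_aemeasurable hmY measurableSet_Iic]
    rfl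
  set s : ℝ := Real.sqrt (σ₁ ^ 2 + σ₂ ^ 2) with hsdef
  have hs : 0 < s := Real.sqrt_pos.mpr (by positivity)
  have hvsum : v₁ + v₂ = ⟨s ^ 2, sq_nonneg s⟩ := by
    ext
    simp [hv₁def, hv₂def, hsdef, Real.sq_sqrt (by positivity : (0:ℝ) ≤ σ₁ ^ 2 + σ₂ ^ 2)]
    rfl
  have hPS : P {ω | X ω + Y ω ≤ qX + qY}
      = gaussianReal 0 1 (Set.Iic ((qX + qY - (μ₁ + μ₂)) / s)) := by
    rw [← aux_gaussianReal_Iic (μ₁ + μ₂) s hs, ← hvsum, ← hsum,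
      Measure.map_apply_of_aemeasurable (f := fun ω => X ω + Y ω) (hmX.add hmY) measurableSet_Iic]
    rfl
  rw [hPX] at hqX
  rw [hPY] at hqY
  rw [hPS]
  -- quantiles are nonnegative
  set z₁ : ℝ := (qX - μ₁) / σ₁
  set z₂ : ℝ := (qY - μ₂) / σ₂
  have hϱ2 : ENNReal.ofReal (1/2 : ℝ) ≤ ENNReal.ofReal ϱ := ENNReal.ofReal_le_ofReal hϱ.1
  have hz₁ : 0 ≤ z₁ := aux_quantile_nonneg (le_trans hϱ2 hqX)
  have hz₂ : 0 ≤ z₂ := aux_quantile_nonneg (le_trans hϱ2 hqY)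
  -- key real inequality
  have hmin : min z₁ z₂ ≤ (qX + qY - (μ₁ + μ₂)) / s := by
    have h1 : σ₁ * z₁ + σ₂ * z₂ = qX + qY - (μ₁ + μ₂) := by
      simp only [z₁, z₂]
      field_simp [z₁, z₂]
      ring
    have hminnn : 0 ≤ min z₁ z₂ := le_min hz₁ hz₂
    have hss : s ≤ σ₁ + σ₂ := by
      rw [hsdef]
      rw [show σ₁ + σ₂ = Real.sqrt ((σ₁ + σ₂) ^ 2) from (Real.sqrt_sq (by positivity)).symm]
      apply Real.sqrt_le_sqrt
      nlinarith
    rw [le_div_iff₀ hs, ← h1]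
    have h2 : s * min z₁ z₂ ≤ (σ₁ + σ₂) * min z₁ z₂ := by
      apply mul_le_mul_of_nonneg_right hss hminnn
    refine le_trans ?_ (le_trans h2 ?_)
    · ring_nf; rfl
    nlinarith [min_le_left z₁ z₂, min_le_right z₁ z₂]
  -- conclude by monotonicity
  rcases min_choice z₁ z₂ with h | h
  · calc ENNReal.ofReal ϱ ≤ gaussianReal 0 1 (Set.Iic z₁) := hqX
      _ ≤ _ := measure_mono (Set.Iic_subset_Iic.mpr (h ▸ hmin))
  · calc ENNReal.ofReal ϱ ≤ gaussianReal 0 1 (Set.Iic z₂) := hqY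
      _ ≤ _ := measure_mono (Set.Iic_subset_Iic.mpr (h ▸ hmin))
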